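/- arXiv:1311.7564 — 7 statements merged into one kernel-verified Lean document; each statement's English description precedes it below -/
import Mathlib

section
/- Let X be a type and σ : X → X an involution (σ ∘ σ = id). Let I₁ and I₂ be clean subsets of X. Then I₁ ∪ I₂ is clean if and only if at least one of the following holds: (1) σ(I₁) = I₁ and σ(I₂) = I₂; (2) Iᵢ ∩ σ(I_j) = ∅ for all i, j ∈ {1,2}; (3) I₁ = σ(I₂); (4) I₁ ⊆ I₂ or I₂ ⊆ I₁. (Here σ(S) denotes the image of the set S under σ.) -/
/-- A subset `S` of `X` is *clean* with respect to an involution `σ : X → X` if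
either `σ '' S = S` or `S ∩ σ '' S = ∅`. -/
def IsClean {X : Type*} (σ : X → X) (S : Set X) : Prop :=
  σ '' S = S ∨ S ∩ σ '' S = ∅

/-- Lemma 2.5: the union of two clean sets is clean iff one of the four conditions holds. -/
theorem clean_union_iff {X : Type*} (σ : X → X) (hσ : σ ∘ σ = id)
    (I₁ I₂ : Set X) (h₁ : IsClean σ I₁) (h₂ : IsClean σ I₂) :
    IsClean σ (I₁ ∪ I₂) ↔
      (σ '' I₁ = I₁ ∧ σ '' I₂ = I₂) ∨
      (I₁ ∩ σ '' I₁ = ∅ ∧ I₁ ∩ σ '' I₂ = ∅ ∧ I₂ ∩ σ '' I₁ = ∅ ∧ I₂ ∩ σ '' I₂ = ∅) ∨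
      I₁ = σ '' I₂ ∨
      (I₁ ⊆ I₂ ∨ I₂ ⊆ I₁) := by
  have key : ∀ S : Set X, σ '' (σ '' S) = S := fun S => by
    rw [← Set.image_comp, hσ, Set.image_id]
  constructor
  · rintro (hA | hB)
    · rw [Set.image_union] at hA
      rcases h₁ with hs₁ | hd₁ <;> rcases h₂ with hs₂ | hd₂
      · exact Or.inl ⟨hs₁, hs₂⟩
      · -- σI₁ = I₁, I₂ disjoint from σI₂ : get I₂ ⊆ I₁
        refine Or.inr (Or.inr (Or.inr (Or.inr ?_)))
        have hsub : σ '' I₂ ⊆ I₁ := by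
          intro y hy
          have hyu : y ∈ I₁ ∪ I₂ := by rw [← hA]; exact Or.inr hy
          rcases hyu with h | h
          · exact h
          · have hmem : y ∈ I₂ ∩ σ '' I₂ := ⟨h, hy⟩
            rw [hd₂] at hmem; exact hmem.elim
        calc I₂ = σ '' (σ '' I₂) := (key I₂).symm
          _ ⊆ σ '' I₁ := Set.image_mono (f := σ) hsub
          _ = I₁ := hs₁
      · refine Or.inr (Or.inr (Or.inr (Or.inl ?_)))
        have hsub : σ '' I₁ ⊆ I₂ := by
          intro y hy
          have hyu : y ∈ I₁ ∪ I₂ := by rw [← hA]; exact Or.inl hy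
          rcases hyu with h | h
          · have hmem : y ∈ I₁ ∩ σ '' I₁ := ⟨h, hy⟩
            rw [hd₁] at hmem; exact hmem.elim
          · exact h
        calc I₁ = σ '' (σ '' I₁) := (key I₁).symm
          _ ⊆ σ '' I₂ := Set.image_mono (f := σ) hsub
          _ = I₂ := hs₂
      · -- both disjoint from their images : I₁ = σ '' I₂
        refine Or.inr (Or.inr (Or.inl ?_))
        have hsub₁ : σ '' I₁ ⊆ I₂ := by
          intro y hy
          have hyu : y ∈ I₁ ∪ I₂ := by rw [← hA]; exact Or.inl hy
          rcases hyu with h | h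
          · have hmem : y ∈ I₁ ∩ σ '' I₁ := ⟨h, hy⟩
            rw [hd₁] at hmem; exact hmem.elim
          · exact h
        have hsub₂ : σ '' I₂ ⊆ I₁ := by
          intro y hy
          have hyu : y ∈ I₁ ∪ I₂ := by rw [← hA]; exact Or.inr hy
          rcases hyu with h | h
          · exact h
          · have hmem : y ∈ I₂ ∩ σ '' I₂ := ⟨h, hy⟩
            rw [hd₂] at hmem; exact hmem.elim
        refine Set.Subset.antisymm ?_ hsub₂
        calc I₁ = σ '' (σ '' I₁) := (key I₁).symm
          _ ⊆ σ '' I₂ := Set.image_mono (f := σ) hsub₁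
    · -- the union is disjoint from its image : all four intersections empty
      rw [Set.image_union] at hB
      refine Or.inr (Or.inl ?_)
      have empty : ∀ A B : Set X, A ⊆ I₁ ∪ I₂ → B ⊆ σ '' I₁ ∪ σ '' I₂ →
          A ∩ B = ∅ := by
        intro A B hA' hB'
        apply Set.eq_empty_iff_forall_notMem.mpr
        rintro x ⟨hx1, hx2⟩
        have : x ∈ (I₁ ∪ I₂) ∩ (σ '' I₁ ∪ σ '' I₂) := ⟨hA' hx1, hB' hx2⟩
        rw [hB] at this; exact this
      exact ⟨empty _ _ Set.subset_union_left Set.subset_union_left,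
             empty _ _ Set.subset_union_left Set.subset_union_right,
             empty _ _ Set.subset_union_right Set.subset_union_left,
             empty _ _ Set.subset_union_right Set.subset_union_right⟩
  · rintro (⟨hs₁, hs₂⟩ | ⟨ha, hb, hc, hd⟩ | he | hsub | hsub)
    · left; rw [Set.image_union, hs₁, hs₂]
    · right
      rw [Set.image_union]
      apply Set.eq_empty_iff_forall_notMem.mpr
      rintro x ⟨hx1 | hx1, hx2 | hx2⟩
      · have : x ∈ I₁ ∩ σ '' I₁ := ⟨hx1, hx2⟩; rw [ha] at this; exact this
      · have : x ∈ I₁ ∩ σ '' I₂ := ⟨hx1, hx2⟩; rw [hb] at this; exact this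
      · have : x ∈ I₂ ∩ σ '' I₁ := ⟨hx1, hx2⟩; rw [hc] at this; exact this
      · have : x ∈ I₂ ∩ σ '' I₂ := ⟨hx1, hx2⟩; rw [hd] at this; exact this
    · left
      have h1 : σ '' I₁ = I₂ := by rw [he, key]
      rw [Set.image_union, h1, ← he]
      exact Set.union_comm _ _
    · rw [Set.union_eq_self_of_subset_left hsub]; exact h₂
    · rw [Set.union_eq_self_of_subset_right hsub]; exact h₁
end

section
/- Let p₁, p₂ ∈ X and let rᵢ > 0, r'ᵢ > 0 satisfy r'ᵢ ≤ rᵢ/5 for i = 1, 2. Suppose that B̄(p₂, r'₂) is not contained in B(p₁, r₁) and B̄(p₁, r'₁) is not contained in B(p₂, r₂). Then d(p₁, p₂) ≥ (2/5)(r₁ + r₂). Moreover, setting sᵢ := 2·rᵢ·d(p₁,p₂) / (3(r₁ + r₂)), one has sᵢ ≥ (4/15)·rᵢ > r'ᵢ for i = 1, 2, and B(p₁, s₁) ∩ B(p₂, s₂) = ∅. -/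
/-- The key metric estimate in the first case of the proof of Lemma 4.23 (EsDisjAn):
if neither inner closed ball is contained in the other outer open ball, then the centers
are far apart, and the balls of radii `sᵢ = 2 rᵢ d(p₁,p₂) / (3(r₁+r₂))` are disjoint,
with `sᵢ ≥ (4/15) rᵢ > r'ᵢ`. -/
theorem esDisjAn_case1 {X : Type*} [MetricSpace X] (p₁ p₂ : X) (r₁ r₂ r₁' r₂' : ℝ)
    (hr₁ : 0 < r₁) (hr₂ : 0 < r₂) (hr₁' : 0 < r₁') (hr₂' : 0 < r₂')
    (hadm₁ : r₁' ≤ r₁ / 5) (hadm₂ : r₂' ≤ r₂ / 5)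
    (hnc₁ : ¬ Metric.closedBall p₂ r₂' ⊆ Metric.ball p₁ r₁)
    (hnc₂ : ¬ Metric.closedBall p₁ r₁' ⊆ Metric.ball p₂ r₂) :
    (2 / 5) * (r₁ + r₂) ≤ dist p₁ p₂ ∧
    ∀ s₁ s₂ : ℝ,
      s₁ = 2 * r₁ * dist p₁ p₂ / (3 * (r₁ + r₂)) →
      s₂ = 2 * r₂ * dist p₁ p₂ / (3 * (r₁ + r₂)) →
      ((4 / 15) * r₁ ≤ s₁ ∧ r₁' < s₁) ∧
      ((4 / 15) * r₂ ≤ s₂ ∧ r₂' < s₂) ∧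
      Metric.ball p₁ s₁ ∩ Metric.ball p₂ s₂ = ∅ := by
  obtain ⟨x, hx₂, hx₁⟩ := Set.not_subset.mp hnc₁
  obtain ⟨y, hy₁, hy₂⟩ := Set.not_subset.mp hnc₂
  rw [Metric.mem_closedBall] at hx₂ hy₁
  rw [Metric.mem_ball, not_lt] at hx₁ hy₂
  have h1 : r₁ - r₂' ≤ dist p₁ p₂ := by
    have := dist_triangle x p₂ p₁
    rw [dist_comm p₂ p₁] at this
    linarith
  have h2 : r₂ - r₁' ≤ dist p₁ p₂ := by
    have := dist_triangle y p₁ p₂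
    linarith
  have hd : (2 / 5) * (r₁ + r₂) ≤ dist p₁ p₂ := by linarith
  refine ⟨hd, fun s₁ s₂ hs₁ hs₂ => ?_⟩
  have hsum : 0 < r₁ + r₂ := by linarith
  have hs₁ge : (4 / 15) * r₁ ≤ s₁ := by
    rw [hs₁, le_div_iff₀ (by linarith)]
    nlinarith
  have hs₂ge : (4 / 15) * r₂ ≤ s₂ := by
    rw [hs₂, le_div_iff₀ (by linarith)]
    nlinarith
  refine ⟨⟨hs₁ge, by linarith⟩, ⟨hs₂ge, by linarith⟩, ?_⟩
  rw [Set.eq_empty_iff_forall_notMem]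
  rintro z ⟨hz₁, hz₂⟩
  rw [Metric.mem_ball] at hz₁ hz₂
  have ht := dist_triangle p₁ z p₂
  rw [dist_comm z p₁] at hz₁
  have hss : s₁ + s₂ = 2 / 3 * dist p₁ p₂ := by
    rw [hs₁, hs₂]; field_simp
  have hdpos : 0 < dist p₁ p₂ := by linarith
  linarith
end

section
/- Let p₁, p₂ ∈ X and let rᵢ > 0, r'ᵢ > 0 satisfy r'ᵢ ≤ rᵢ/5 for i = 1, 2. Suppose that B̄(p₁, r'₁) ∩ B̄(p₂, r'₂) ≠ ∅ and that B̄(p₁, r'₁) is not contained in B(p₂, r₂). Then r₂ ≤ (5/2)·r'₁ and d(p₁, p₂) + r₂ ≤ 4·r'₁; consequently B(p₂, r₂) ⊆ B(p₁, 4·r'₁), and in particular the annulus A(r₁, 4r'₁, p₁) = B(p₁, r₁) \ B̄(p₁, 4r'₁) is disjoint from B(p₂, r₂). -/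
/-- The key metric estimate in the second case of the proof of Lemma 4.23 (EsDisjAn):
if the inner closed balls intersect but `B̄(p₁,r'₁)` is not contained in `B(p₂,r₂)`,
then `r₂ ≤ (5/2) r'₁`, `d(p₁,p₂) + r₂ ≤ 4 r'₁`, hence `B(p₂,r₂) ⊆ B(p₁, 4 r'₁)` and the
annulus `A(r₁, 4 r'₁, p₁)` is disjoint from `B(p₂, r₂)`. -/
theorem esDisjAn_case2 {X : Type*} [MetricSpace X] (p₁ p₂ : X) (r₁ r₂ r₁' r₂' : ℝ)
    (hr₁ : 0 < r₁) (hr₂ : 0 < r₂) (hr₁' : 0 < r₁') (hr₂' : 0 < r₂')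
    (hadm₁ : r₁' ≤ r₁ / 5) (hadm₂ : r₂' ≤ r₂ / 5)
    (hint : (Metric.closedBall p₁ r₁' ∩ Metric.closedBall p₂ r₂').Nonempty)
    (hnc : ¬ Metric.closedBall p₁ r₁' ⊆ Metric.ball p₂ r₂) :
    r₂ ≤ (5 / 2) * r₁' ∧
    dist p₁ p₂ + r₂ ≤ 4 * r₁' ∧
    Metric.ball p₂ r₂ ⊆ Metric.ball p₁ (4 * r₁') ∧
    (Metric.ball p₁ r₁ \ Metric.closedBall p₁ (4 * r₁')) ∩ Metric.ball p₂ r₂ = ∅ := by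
  obtain ⟨y, hy₁, hy₂⟩ := hint
  rw [Metric.mem_closedBall] at hy₁ hy₂
  obtain ⟨x, hx₁, hx₂⟩ := Set.not_subset.1 hnc
  rw [Metric.mem_closedBall] at hx₁
  rw [Metric.mem_ball, not_lt] at hx₂
  have hupper : dist p₁ p₂ ≤ r₁' + r₂' := by
    calc dist p₁ p₂ ≤ dist p₁ y + dist y p₂ := dist_triangle _ _ _
    _ = dist y p₁ + dist y p₂ := by rw [dist_comm]
    _ ≤ r₁' + r₂' := add_le_add hy₁ hy₂
  have hlower : r₂ - r₁' ≤ dist p₁ p₂ := by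
    have h := dist_triangle p₂ p₁ x
    have hx₂' : r₂ ≤ dist p₂ x := by rw [dist_comm]; exact hx₂
    have hx₁' : dist p₁ x ≤ r₁' := by rw [dist_comm]; exact hx₁
    rw [dist_comm p₁ p₂]
    linarith
  have h1 : r₂ ≤ (5 / 2) * r₁' := by linarith
  have h2 : dist p₁ p₂ + r₂ ≤ 4 * r₁' := by linarith
  refine ⟨h1, h2, ?_, ?_⟩
  · intro z hz
    rw [Metric.mem_ball] at hz ⊢
    calc dist z p₁ ≤ dist z p₂ + dist p₂ p₁ := dist_triangle _ _ _
    _ < r₂ + dist p₂ p₁ := by linarith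
    _ ≤ 4 * r₁' := by rw [dist_comm]; linarith
  · ext z
    simp only [Set.mem_inter_iff, Set.mem_diff, Metric.mem_ball, Metric.mem_closedBall,
      Set.mem_empty_iff_false, iff_false, not_and, not_lt, and_imp]
    intro _ hz2
    push_neg at hz2
    have h := dist_triangle z p₂ p₁
    rw [dist_comm p₂ p₁] at h
    linarith
end

section
/- Let p₁, p₂ ∈ X, let rᵢ > 0, r'ᵢ > 0 satisfy r'ᵢ ≤ rᵢ/5 for i = 1, 2, and suppose r₂ ≤ r₁. Set Iᵢ := B(pᵢ, rᵢ) \ B̄(pᵢ, r'ᵢ) and J := (B(p₁, r₁) ∪ B(p₂, r₂)) \ (B̄(p₁, r'₁) ∩ B̄(p₂, r'₂)). Suppose B̄(p₁, r'₁) ∩ B̄(p₂, r'₂) ≠ ∅ and J ≠ I₁ ∪ I₂. Then: (1) d(p₁, p₂) ≤ r'₁ + r'₂; (2) r₂ ≤ (5/2)·r'₁; (3) B̄(p₂, r'₂) ⊆ B(p₁, r₁) and B(p₂, r₂) ⊆ B(p₁, r₁). -/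
/-- Parts 1 and 2 of Lemma 4.25 (lmI1Isharp2I): if the inner closed balls meet and the
minimal annulus `J` differs from `I₁ ∪ I₂`, then `d(p₁,p₂) ≤ r'₁ + r'₂`,
`r₂ ≤ (5/2) r'₁`, and `B̄(p₂,r'₂) ⊆ B(p₁,r₁)`, `B(p₂,r₂) ⊆ B(p₁,r₁)`. -/
theorem lmI1Isharp2I_parts12 {X : Type*} [MetricSpace X] (p₁ p₂ : X) (r₁ r₂ r₁' r₂' : ℝ)
    (hr₁ : 0 < r₁) (hr₂ : 0 < r₂) (hr₁' : 0 < r₁') (hr₂' : 0 < r₂')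
    (hadm₁ : r₁' ≤ r₁ / 5) (hadm₂ : r₂' ≤ r₂ / 5) (hr₂₁ : r₂ ≤ r₁)
    (hint : (Metric.closedBall p₁ r₁' ∩ Metric.closedBall p₂ r₂').Nonempty)
    (hJ : (Metric.ball p₁ r₁ ∪ Metric.ball p₂ r₂) \
            (Metric.closedBall p₁ r₁' ∩ Metric.closedBall p₂ r₂') ≠
          (Metric.ball p₁ r₁ \ Metric.closedBall p₁ r₁') ∪
            (Metric.ball p₂ r₂ \ Metric.closedBall p₂ r₂')) :
    dist p₁ p₂ ≤ r₁' + r₂' ∧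
    r₂ ≤ (5 / 2) * r₁' ∧
    Metric.closedBall p₂ r₂' ⊆ Metric.ball p₁ r₁ ∧
    Metric.ball p₂ r₂ ⊆ Metric.ball p₁ r₁ := by
  obtain ⟨z, hz₁, hz₂⟩ := hint
  simp only [Metric.mem_closedBall] at hz₁ hz₂
  -- Part 1
  have h1 : dist p₁ p₂ ≤ r₁' + r₂' := by
    calc dist p₁ p₂ ≤ dist p₁ z + dist z p₂ := dist_triangle _ _ _
    _ ≤ r₁' + r₂' := by
      have e1 := dist_comm p₁ z
      have e2 := dist_comm z p₂
      linarith
  -- I₁ ∪ I₂ ⊆ J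
  have hsub : (Metric.ball p₁ r₁ \ Metric.closedBall p₁ r₁') ∪
      (Metric.ball p₂ r₂ \ Metric.closedBall p₂ r₂') ⊆
      (Metric.ball p₁ r₁ ∪ Metric.ball p₂ r₂) \
        (Metric.closedBall p₁ r₁' ∩ Metric.closedBall p₂ r₂') := by
    rintro x (⟨hb, hc⟩ | ⟨hb, hc⟩)
    · exact ⟨Or.inl hb, fun h => hc h.1⟩
    · exact ⟨Or.inr hb, fun h => hc h.2⟩
  have hns : ¬ ((Metric.ball p₁ r₁ ∪ Metric.ball p₂ r₂) \
        (Metric.closedBall p₁ r₁' ∩ Metric.closedBall p₂ r₂') ⊆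
      (Metric.ball p₁ r₁ \ Metric.closedBall p₁ r₁') ∪
        (Metric.ball p₂ r₂ \ Metric.closedBall p₂ r₂')) :=
    fun h => hJ (Set.Subset.antisymm h hsub)
  obtain ⟨x, hxJ, hxI⟩ := Set.not_subset.mp hns
  obtain ⟨hxB, hxC⟩ := hxJ
  simp only [Set.mem_union, Set.mem_diff, Set.mem_inter_iff, Metric.mem_ball,
    Metric.mem_closedBall, not_and, not_or, not_lt, not_le] at hxB hxC hxI
  -- Part 2
  have h2 : r₂ ≤ (5/2) * r₁' := by
    rcases hxB with hB1 | hB2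
    · have hC1 : dist x p₁ ≤ r₁' := hxI.1 hB1
      have hC2 : r₂' < dist x p₂ := hxC hC1
      have hgt : r₂ ≤ dist x p₂ :=
        le_of_not_gt fun h => absurd (hxI.2 h) (not_le.mpr hC2)
      have htri : dist x p₂ ≤ dist x p₁ + dist p₁ p₂ := dist_triangle _ _ _
      linarith
    · exfalso
      have hC2 : dist x p₂ ≤ r₂' := hxI.2 hB2
      have hC1 : ¬ dist x p₁ ≤ r₁' := fun h => absurd hC2 (not_le.mpr (hxC h))
      have hgt : r₁ ≤ dist x p₁ :=
        le_of_not_gt fun h => hC1 (hxI.1 h)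
      have htri : dist x p₁ ≤ dist x p₂ + dist p₂ p₁ := dist_triangle _ _ _
      have e := dist_comm p₂ p₁
      linarith
  refine ⟨h1, h2, ?_, ?_⟩
  · intro y hy
    simp only [Metric.mem_closedBall, Metric.mem_ball] at *
    have : dist y p₁ ≤ dist y p₂ + dist p₂ p₁ := dist_triangle _ _ _
    rw [dist_comm p₂ p₁] at this
    have := dist_comm p₁ p₂
    linarith
  · intro y hy
    simp only [Metric.mem_ball] at *
    have : dist y p₁ ≤ dist y p₂ + dist p₂ p₁ := dist_triangle _ _ _
    rw [dist_comm p₂ p₁] at this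
    linarith
end

section
/- Let p₁, p₂ ∈ X, let rᵢ > 0, r'ᵢ > 0 satisfy r'ᵢ ≤ rᵢ/5 for i = 1, 2, and suppose r₂ ≤ r₁. Set Iᵢ := B(pᵢ, rᵢ) \ B̄(pᵢ, r'ᵢ) and J := (B(p₁, r₁) ∪ B(p₂, r₂)) \ (B̄(p₁, r'₁) ∩ B̄(p₂, r'₂)). Suppose B̄(p₁, r'₁) ∩ B̄(p₂, r'₂) ≠ ∅ and J ≠ I₁ ∪ I₂. Then, setting r := r₁ − d(p₁, p₂), one has J = I₁ ∪ (B(p₂, r) \ B̄(p₂, r'₂)). -/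
/-- Part 3 of Lemma 4.25 (lmI1Isharp2I): under the same hypotheses, with
`r := r₁ − d(p₁,p₂)`, the minimal annulus `J` equals `I₁ ∪ (B(p₂,r) \ B̄(p₂,r'₂))`. -/
theorem lmI1Isharp2I_part3 {X : Type*} [MetricSpace X] (p₁ p₂ : X) (r₁ r₂ r₁' r₂' : ℝ)
    (hr₁ : 0 < r₁) (hr₂ : 0 < r₂) (hr₁' : 0 < r₁') (hr₂' : 0 < r₂')
    (hadm₁ : r₁' ≤ r₁ / 5) (hadm₂ : r₂' ≤ r₂ / 5) (hr₂₁ : r₂ ≤ r₁)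
    (hint : (Metric.closedBall p₁ r₁' ∩ Metric.closedBall p₂ r₂').Nonempty)
    (hJ : (Metric.ball p₁ r₁ ∪ Metric.ball p₂ r₂) \
            (Metric.closedBall p₁ r₁' ∩ Metric.closedBall p₂ r₂') ≠
          (Metric.ball p₁ r₁ \ Metric.closedBall p₁ r₁') ∪
            (Metric.ball p₂ r₂ \ Metric.closedBall p₂ r₂')) :
    (Metric.ball p₁ r₁ ∪ Metric.ball p₂ r₂) \
        (Metric.closedBall p₁ r₁' ∩ Metric.closedBall p₂ r₂') =
      (Metric.ball p₁ r₁ \ Metric.closedBall p₁ r₁') ∪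
        (Metric.ball p₂ (r₁ - dist p₁ p₂) \ Metric.closedBall p₂ r₂') := by
  obtain ⟨z, hz₁, hz₂⟩ := hint
  rw [Metric.mem_closedBall] at hz₁ hz₂
  have hd : dist p₁ p₂ ≤ r₁' + r₂' := by
    have h1 := dist_triangle p₁ z p₂
    have h2 : dist p₁ z = dist z p₁ := dist_comm _ _
    have h3 : dist z p₂ = dist p₂ z := dist_comm _ _
    linarith
  have hd2 : r₂ - r₁' ≤ dist p₁ p₂ := by
    by_contra h
    push_neg at h
    apply hJ
    ext x
    simp only [Set.mem_diff, Set.mem_union, Set.mem_inter_iff, Metric.mem_ball,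
      Metric.mem_closedBall, not_and_or, not_le]
    have t1 := dist_triangle x p₁ p₂
    have t2 := dist_triangle x p₂ p₁
    have hc : dist p₂ p₁ = dist p₁ p₂ := dist_comm _ _
    constructor
    · rintro ⟨hb, hc'⟩
      rcases hc' with h1 | h2
      · rcases hb with hb1 | hb2
        · exact Or.inl ⟨hb1, h1⟩
        · by_cases hx2 : r₂' < dist x p₂
          · exact Or.inr ⟨hb2, hx2⟩
          · push_neg at hx2
            exact Or.inl ⟨by linarith, h1⟩
      · by_cases hx1 : r₁' < dist x p₁
        · rcases hb with hb1 | hb2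
          · exact Or.inl ⟨hb1, hx1⟩
          · exact Or.inr ⟨hb2, h2⟩
        · push_neg at hx1
          exact Or.inr ⟨by linarith, h2⟩
    · rintro (⟨h1, h2⟩ | ⟨h1, h2⟩)
      · exact ⟨Or.inl h1, Or.inl h2⟩
      · exact ⟨Or.inr h1, Or.inr h2⟩
  ext x
  simp only [Set.mem_diff, Set.mem_union, Set.mem_inter_iff, Metric.mem_ball,
    Metric.mem_closedBall, not_and_or, not_le]
  have t1 := dist_triangle x p₁ p₂
  have t2 := dist_triangle x p₂ p₁
  have hc : dist p₂ p₁ = dist p₁ p₂ := dist_comm _ _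
  constructor
  · rintro ⟨hb, hc'⟩
    rcases hc' with h1 | h2
    · rcases hb with hb1 | hb2
      · exact Or.inl ⟨hb1, h1⟩
      · by_cases hx2 : r₂' < dist x p₂
        · exact Or.inr ⟨by linarith, hx2⟩
        · push_neg at hx2
          exact Or.inl ⟨by linarith, h1⟩
    · by_cases hx1 : r₁' < dist x p₁
      · rcases hb with hb1 | hb2
        · exact Or.inl ⟨hb1, hx1⟩
        · exact Or.inr ⟨by linarith, h2⟩
      · push_neg at hx1
        exact Or.inr ⟨by linarith, h2⟩
  · rintro (⟨h1, h2⟩ | ⟨h1, h2⟩)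
    · exact ⟨Or.inl h1, Or.inl h2⟩
    · exact ⟨Or.inl (by linarith), Or.inr h2⟩
end

section
/- Let p₁, p₂, p₃ ∈ X and let rᵢ > 0, r'ᵢ > 0 satisfy rᵢ ≥ 5·r'ᵢ for i = 1, 2, 3. Suppose B̄(p₁, r'₁) ∩ B̄(p₂, r'₂) ≠ ∅ and B̄(p₂, r'₂) ∩ B̄(p₃, r'₃) ≠ ∅. Then either B̄(p₁, r'₁) ⊆ B(p₂, r₂) ∪ B(p₃, r₃), or B̄(p₃, r'₃) ⊆ B(p₁, r₁) ∪ B(p₂, r₂). -/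
/-- The main metric dichotomy in the proof of Lemma 3.10 (lmRelEq): if the inner closed
balls of three admissible annuli meet consecutively, then either the first inner ball is
contained in the union of the second and third outer balls, or the third inner ball is
contained in the union of the first and second outer balls. -/
theorem lmRelEq_dichotomy {X : Type*} [MetricSpace X] (p₁ p₂ p₃ : X)
    (r₁ r₂ r₃ r₁' r₂' r₃' : ℝ)
    (hr₁ : 0 < r₁) (hr₂ : 0 < r₂) (hr₃ : 0 < r₃)
    (hr₁' : 0 < r₁') (hr₂' : 0 < r₂') (hr₃' : 0 < r₃')
    (hadm₁ : 5 * r₁' ≤ r₁) (hadm₂ : 5 * r₂' ≤ r₂) (hadm₃ : 5 * r₃' ≤ r₃)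
    (h₁₂ : (Metric.closedBall p₁ r₁' ∩ Metric.closedBall p₂ r₂').Nonempty)
    (h₂₃ : (Metric.closedBall p₂ r₂' ∩ Metric.closedBall p₃ r₃').Nonempty) :
    Metric.closedBall p₁ r₁' ⊆ Metric.ball p₂ r₂ ∪ Metric.ball p₃ r₃ ∨
    Metric.closedBall p₃ r₃' ⊆ Metric.ball p₁ r₁ ∪ Metric.ball p₂ r₂ := by
  obtain ⟨a, ha1, ha2⟩ := h₁₂
  obtain ⟨b, hb2, hb3⟩ := h₂₃
  simp only [Metric.mem_closedBall] at ha1 ha2 hb2 hb3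
  have d12 : dist p₁ p₂ ≤ r₁' + r₂' := by
    have := dist_triangle p₁ a p₂
    rw [dist_comm p₁ a] at this
    linarith [dist_comm a p₂ ▸ ha2]
  have d23 : dist p₂ p₃ ≤ r₂' + r₃' := by
    have := dist_triangle p₂ b p₃
    rw [dist_comm p₂ b] at this
    linarith [dist_comm b p₃ ▸ hb3]
  by_cases h1 : r₁' < 2 * r₂'
  · left
    intro y hy
    simp only [Metric.mem_closedBall] at hy
    left
    simp only [Metric.mem_ball]
    have := dist_triangle y p₁ p₂
    linarith
  · by_cases h3 : r₃' < 2 * r₂'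
    · right
      intro y hy
      simp only [Metric.mem_closedBall] at hy
      right
      simp only [Metric.mem_ball]
      have := dist_triangle y p₃ p₂
      rw [dist_comm p₃ p₂] at this
      linarith
    · push_neg at h1 h3
      by_cases h13 : r₁' ≤ r₃'
      · left
        intro y hy
        simp only [Metric.mem_closedBall] at hy
        right
        simp only [Metric.mem_ball]
        have t1 := dist_triangle y p₁ p₃
        have t2 := dist_triangle p₁ p₂ p₃
        linarith
      · right
        intro y hy
        simp only [Metric.mem_closedBall] at hy
        left
        simp only [Metric.mem_ball]
        have t1 := dist_triangle y p₃ p₁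
        have t2 := dist_triangle p₃ p₂ p₁
        rw [dist_comm p₃ p₂, dist_comm p₂ p₁] at t2
        push_neg at h13
        linarith
end

section
/- Fix constants c₁, c₂, c₃, δ₁, δ₂ > 0 with δ₂ < δ₁. Let L > 2(c₂ + π). Identify the cylinder of modulus L with (−L/2, L/2) × S¹, where S¹ = ℝ/2πℤ, and for −L/2 ≤ a < b ≤ L/2 write S(a,b) := (a,b) × S¹ and I := S(−L/2, L/2). Let μ be a measure on ℝ × S¹ with continuous density f with respect to the product of Lebesgue measure and Haar measure on S¹. Assume: (gradient inequality) for every ρ₀ with [ρ₀ − π, ρ₀ + π] ⊆ [−L/2, L/2] and every θ ∈ S¹, if μ(S(ρ₀ − π, ρ₀ + π)) ≤ δ₁ then f(ρ₀, θ) ≤ (c₁/π²)·μ(S(ρ₀ − π, ρ₀ + π)); (cylinder inequality) for every t ∈ (c₂, L/2), if μ(I) ≤ δ₂ then μ(S(−(L/2 − t), L/2 − t)) ≤ exp(−c₃·t)·μ(I). Suppose μ(I) ≤ δ₂. Then there is a constant a = (c₁/π²)·exp(c₃·π), depending only on c₁ and c₃, such that for every point (ρ, θ) with |ρ| < L/2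 − c₂ − π, one has f(ρ, θ) ≤ a·exp(−c₃·(L/2 − |ρ|))·μ(I). -/
open MeasureTheory

instance : Fact (0 < 2 * Real.pi) := ⟨by positivity⟩

/-- Lemma 3.4 (ExpCylDEst) specialized to the standard flat cylinder
`I = (−L/2, L/2) × S¹` with `S¹ = ℝ/2πℤ`: a measure `μ` with continuous density `f`
with respect to the product of Lebesgue measure and Haar measure, satisfying the
gradient inequality and the cylinder inequality and having total mass `μ(I) ≤ δ₂`,
has density decaying exponentially in the distance from `∂I`:
`f(ρ,θ) ≤ (c₁/π²)·exp(c₃π) · exp(−c₃(L/2 − |ρ|)) · μ(I)`. -/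
theorem expCylDEst (c₁ c₂ c₃ δ₁ δ₂ L : ℝ)
    (hc₁ : 0 < c₁) (hc₂ : 0 < c₂) (hc₃ : 0 < c₃)
    (hδ₁ : 0 < δ₁) (hδ₂ : 0 < δ₂) (hδ : δ₂ < δ₁)
    (hL : 2 * (c₂ + Real.pi) < L)
    (f : ℝ × AddCircle (2 * Real.pi) → ℝ) (hf : Continuous f) (hf0 : ∀ p, 0 ≤ f p)
    (μ : Measure (ℝ × AddCircle (2 * Real.pi)))
    (hμ : μ = volume.withDensity (fun p => ENNReal.ofReal (f p)))
    -- gradient inequality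
    (grad : ∀ (ρ₀ : ℝ) (θ : AddCircle (2 * Real.pi)),
      -(L / 2) ≤ ρ₀ - Real.pi → ρ₀ + Real.pi ≤ L / 2 →
      μ (Set.Ioo (ρ₀ - Real.pi) (ρ₀ + Real.pi) ×ˢ Set.univ) ≤ ENNReal.ofReal δ₁ →
      f (ρ₀, θ) ≤ c₁ / Real.pi ^ 2 *
        (μ (Set.Ioo (ρ₀ - Real.pi) (ρ₀ + Real.pi) ×ˢ Set.univ)).toReal)
    -- cylinder inequality
    (cyl : ∀ t : ℝ, c₂ < t → t < L / 2 →
      μ (Set.Ioo (-(L / 2)) (L / 2) ×ˢ Set.univ) ≤ ENNReal.ofReal δ₂ →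
      (μ (Set.Ioo (-(L / 2 - t)) (L / 2 - t) ×ˢ Set.univ)).toReal ≤
        Real.exp (-(c₃ * t)) * (μ (Set.Ioo (-(L / 2)) (L / 2) ×ˢ Set.univ)).toReal)
    (hmass : μ (Set.Ioo (-(L / 2)) (L / 2) ×ˢ Set.univ) ≤ ENNReal.ofReal δ₂) :
    ∀ (ρ : ℝ) (θ : AddCircle (2 * Real.pi)), |ρ| < L / 2 - c₂ - Real.pi →
      f (ρ, θ) ≤ (c₁ / Real.pi ^ 2 * Real.exp (c₃ * Real.pi)) *
        Real.exp (-(c₃ * (L / 2 - |ρ|))) *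
        (μ (Set.Ioo (-(L / 2)) (L / 2) ×ˢ Set.univ)).toReal := by

  intro ρ θ hρ
  have hπ := Real.pi_pos
  have habs : 0 ≤ |ρ| := abs_nonneg ρ
  have h1 : -(L / 2) ≤ ρ - Real.pi := by
    have := neg_abs_le ρ; nlinarith
  have h2 : ρ + Real.pi ≤ L / 2 := by
    have := le_abs_self ρ; nlinarith
  -- subset of I
  have hsub : Set.Ioo (ρ - Real.pi) (ρ + Real.pi) ×ˢ (Set.univ : Set (AddCircle (2*Real.pi)))
      ⊆ Set.Ioo (-(L / 2)) (L / 2) ×ˢ Set.univ :=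
    Set.prod_mono (Set.Ioo_subset_Ioo h1 h2) le_rfl
  have hμsub := measure_mono (μ := μ) hsub
  have hIfin : μ (Set.Ioo (-(L / 2)) (L / 2) ×ˢ Set.univ) ≠ ⊤ :=
    (lt_of_le_of_lt hmass ENNReal.ofReal_lt_top).ne
  have hδle : μ (Set.Ioo (ρ - Real.pi) (ρ + Real.pi) ×ˢ Set.univ) ≤ ENNReal.ofReal δ₁ :=
    le_trans (le_trans hμsub hmass) (ENNReal.ofReal_le_ofReal hδ.le)
  have hgrad := grad ρ θ h1 h2 hδle
  set t : ℝ := L / 2 - |ρ| - Real.pi with ht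
  have ht1 : c₂ < t := by simp only [ht]; linarith
  have ht2 : t < L / 2 := by simp only [ht]; nlinarith
  have hcyl := cyl t ht1 ht2 hmass
  have hsub2 : Set.Ioo (ρ - Real.pi) (ρ + Real.pi) ×ˢ (Set.univ : Set (AddCircle (2*Real.pi)))
      ⊆ Set.Ioo (-(L / 2 - t)) (L / 2 - t) ×ˢ Set.univ := by
    refine Set.prod_mono (Set.Ioo_subset_Ioo ?_ ?_) le_rfl
    · have := neg_abs_le ρ; simp only [ht]; linarith
    · have := le_abs_self ρ; simp only [ht]; linarith
  have hsub2I : Set.Ioo (-(L / 2 - t)) (L / 2 - t) ×ˢ (Set.univ : Set (AddCircle (2*Real.pi)))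
      ⊆ Set.Ioo (-(L / 2)) (L / 2) ×ˢ Set.univ := by
    refine Set.prod_mono (Set.Ioo_subset_Ioo ?_ ?_) le_rfl
    · simp only [ht]; nlinarith
    · simp only [ht]; nlinarith
  have hfin2 : μ (Set.Ioo (-(L / 2 - t)) (L / 2 - t) ×ˢ Set.univ) ≠ ⊤ :=
    (lt_of_le_of_lt (measure_mono hsub2I) (lt_of_le_of_lt hmass ENNReal.ofReal_lt_top)).ne
  have hmono : (μ (Set.Ioo (ρ - Real.pi) (ρ + Real.pi) ×ˢ Set.univ)).toReal ≤
      (μ (Set.Ioo (-(L / 2 - t)) (L / 2 - t) ×ˢ Set.univ)).toReal :=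
    ENNReal.toReal_mono hfin2 (measure_mono hsub2)
  have hexp : Real.exp (-(c₃ * t)) = Real.exp (c₃ * Real.pi) * Real.exp (-(c₃ * (L / 2 - |ρ|))) := by
    rw [← Real.exp_add, ht]; ring_nf
  have hInn : 0 ≤ (μ (Set.Ioo (-(L / 2)) (L / 2) ×ˢ Set.univ)).toReal := ENNReal.toReal_nonneg
  calc f (ρ, θ) ≤ c₁ / Real.pi ^ 2 *
        (μ (Set.Ioo (ρ - Real.pi) (ρ + Real.pi) ×ˢ Set.univ)).toReal := hgrad
    _ ≤ c₁ / Real.pi ^ 2 * (Real.exp (-(c₃ * t)) *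
        (μ (Set.Ioo (-(L / 2)) (L / 2) ×ˢ Set.univ)).toReal) := by
        have h0 : 0 ≤ c₁ / Real.pi ^ 2 := by positivity
        exact mul_le_mul_of_nonneg_left (le_trans hmono hcyl) h0
    _ = (c₁ / Real.pi ^ 2 * Real.exp (c₃ * Real.pi)) *
        Real.exp (-(c₃ * (L / 2 - |ρ|))) *
        (μ (Set.Ioo (-(L / 2)) (L / 2) ×ˢ Set.univ)).toReal := by
        rw [hexp]; ring
end
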